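/- Integral representation of the normalized level-2 multiple zeta function: for positive integers l_1,…,l_{m−1} and Re s > 1, T(l_1,…,l_{m−1},s) = (1/(Γ(l_1)⋯Γ(l_{m−1})Γ(s))) ∫_0^∞⋯∫_0^∞ x_1^{l_1−1}⋯x_{m−1}^{l_{m−1}−1} x_m^{s−1} ∏_{j=1}^m 1/sinh(x_j+⋯+x_m) dx_1⋯dx_m. -/

import Mathlib

open Real Finset MeasureTheory

section Aux

lemma hasSum_pi_prod {k : ℕ} {f : Fin k → ℕ → ℝ} (hf : ∀ i n, 0 ≤ f i n)
    {a : Fin k → ℝ} (h : ∀ i, HasSum (f i) (a i)) :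
    HasSum (fun n : Fin k → ℕ => ∏ i, f i (n i)) (∏ i, a i) := by
  induction k with
  | zero =>
      simp only [Finset.univ_eq_empty, Finset.prod_empty]
      exact hasSum_single (β := Fin 0 → ℕ) default
        (fun b hb => absurd (Subsingleton.elim b default) hb)
  | succ k ih =>
      have hih : HasSum (fun n : Fin k → ℕ => ∏ i : Fin k, f i.succ (n i))
          (∏ i : Fin k, a i.succ) := ih (fun i n => hf _ n) (fun i => h i.succ)
      have h2 : Summable (fun p : ℕ × (Fin k → ℕ) =>
          f 0 p.1 * ∏ i : Fin k, f i.succ (p.2 i)) :=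
        Summable.mul_of_nonneg (g := fun n : Fin k → ℕ => ∏ i : Fin k, f i.succ (n i))
          (h 0).summable hih.summable
          (fun n => hf 0 n) (fun n => Finset.prod_nonneg fun i _ => hf _ _)
      have h1 : HasSum (fun p : ℕ × (Fin k → ℕ) =>
          f 0 p.1 * ∏ i : Fin k, f i.succ (p.2 i))
          (a 0 * ∏ i : Fin k, a i.succ) :=
        HasSum.mul (g := fun n : Fin k → ℕ => ∏ i : Fin k, f i.succ (n i)) (h 0) hih h2
      refine (Fin.consEquiv (fun _ : Fin (k+1) => ℕ)).hasSum_iff.mp ?_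
      rw [Fin.prod_univ_succ]
      convert h1 using 1
      ext p
      simp [Fin.consEquiv, Fin.prod_univ_succ]

lemma hasSum_one_div_sinh {y : ℝ} (hy : 0 < y) :
    HasSum (fun n : ℕ => 2 * Real.exp (-((2 * n + 1) * y))) (1 / Real.sinh y) := by
  have hq1 : Real.exp (-(2*y)) < 1 := by
    rw [Real.exp_lt_one_iff]; linarith
  have h0 := hasSum_geometric_of_lt_one (Real.exp_nonneg _) hq1
  have h1 := h0.mul_left (2 * Real.exp (-y))
  have he : ∀ n : ℕ, 2 * Real.exp (-y) * Real.exp (-(2*y)) ^ n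
      = 2 * Real.exp (-((2 * n + 1) * y)) := by
    intro n
    rw [← Real.exp_nat_mul, mul_assoc, ← Real.exp_add]
    congr 2
    ring
  rw [funext he] at h1
  suffices hsuff : 1 / Real.sinh y = 2 * Real.exp (-y) * (1 - Real.exp (-(2*y)))⁻¹ by
    rw [hsuff]; exact h1
  rw [Real.sinh_eq]
  have h2 : Real.exp y - Real.exp (-y) > 0 := by
    have := Real.exp_lt_exp.mpr (show -y < y by linarith)
    linarith
  have h3 : 1 - Real.exp (-(2*y)) > 0 := by linarith
  have h5 : Real.exp (-(2*y)) = Real.exp (-y) * Real.exp (-y) := by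
    rw [← Real.exp_add]; congr 1; ring
  have h4 : Real.exp (-y) * Real.exp y = 1 := by rw [← Real.exp_add]; simp
  rw [div_div_eq_mul_div, one_mul, eq_comm, mul_inv_eq_iff_eq_mul₀ h3.ne', div_mul_eq_mul_div, eq_div_iff h2.ne']
  rw [h5]
  nlinarith [Real.exp_pos y, Real.exp_pos (-y)]

lemma aux_integrableOn {c : ℂ} (hc : 0 < c.re) {M : ℝ} (hM : 0 < M) :
    IntegrableOn (fun t : ℝ => (t:ℂ) ^ (c - 1) * Complex.exp (-(M * t))) (Set.Ioi 0) := by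
  have h := Complex.GammaIntegral_convergent hc
  rw [← mul_zero M, ← integrableOn_Ioi_comp_mul_left_iff _ _ hM] at h
  refine IntegrableOn.congr_fun (h.const_mul (1 / (M:ℂ) ^ (c - 1)))
    (fun t ht => ?_) measurableSet_Ioi
  rw [Set.mem_Ioi] at ht
  have hMc : ((M:ℂ)) ^ (c - 1) ≠ 0 := by
    rw [Ne, Complex.cpow_eq_zero_iff, not_and_or]
    exact Or.inl (Complex.ofReal_ne_zero.mpr hM.ne')
  have h2 : ((M * t : ℝ) : ℂ) ^ (c - 1) = (M:ℂ) ^ (c - 1) * (t:ℂ) ^ (c - 1) := by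
    rw [Complex.ofReal_mul, Complex.mul_cpow_ofReal_nonneg hM.le ht.le]
  rw [h2]
  push_cast [Complex.ofReal_exp]
  field_simp

lemma aux_norm {c : ℂ} {M t : ℝ} (ht : 0 < t) :
    ‖(t:ℂ) ^ (c - 1) * Complex.exp (-(M * t))‖ = t ^ (c.re - 1) * Real.exp (-(M * t)) := by
  rw [norm_mul,
    Complex.norm_cpow_eq_rpow_re_of_pos ht, Complex.norm_exp]
  simp

end Aux

/-- The level-2 multiple zeta function
`T_0(l_1,…,l_r,s) = ∑ 1/(m_1^{l_1} ⋯ m_r^{l_r} m_{r+1}^s)`, the sum over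
`0 < m_1 < ⋯ < m_{r+1}` with `m_i ≡ i (mod 2)`, i.e. `m_j = ∑_{i ≤ j} (2 n_i + 1)`. -/
noncomputable def T0 (r : ℕ) (l : Fin r → ℕ) (s : ℂ) : ℂ :=
  ∑' n : Fin (r + 1) → ℕ,
    1 / ((∏ j : Fin r,
        ((∑ i ∈ Finset.Iic (Fin.castSucc j), (2 * n i + 1) : ℕ) : ℂ) ^ (l j)) *
      ((∑ i, (2 * n i + 1) : ℕ) : ℂ) ^ s)

/-- The normalized level-2 multiple zeta function `T = 2^{r+1} T_0` (depth `r+1`). -/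
noncomputable def T (r : ℕ) (l : Fin r → ℕ) (s : ℂ) : ℂ := 2 ^ (r + 1) * T0 r l s

set_option maxHeartbeats 1000000 in
/-- Integral representation of the normalized level-2 multiple zeta function. -/
theorem stmt17 (r : ℕ) (l : Fin r → ℕ) (hl : ∀ j, 1 ≤ l j) (s : ℂ) (hs : 1 < s.re) :
    T r l s =
      (1 / ((∏ j, Complex.Gamma (l j)) * Complex.Gamma s)) *
        ∫ x in Set.univ.pi (fun _ : Fin (r + 1) => Set.Ioi (0 : ℝ)),
          (∏ j : Fin r, ((x (Fin.castSucc j) : ℝ) : ℂ) ^ (l j - 1)) *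
            ((x (Fin.last r) : ℝ) : ℂ) ^ (s - 1) *
            ∏ j : Fin (r + 1),
              1 / ((Real.sinh (∑ i ∈ Finset.Ici j, x i) : ℝ) : ℂ) := by
  classical
  have hs0 : (0:ℝ) < s.re := by linarith
  -- the exponent family
  set c : Fin (r+1) → ℂ := Fin.lastCases s (fun j => (l j : ℂ)) with hc
  have hccs : ∀ j : Fin r, c (Fin.castSucc j) = (l j : ℂ) := by intro j; simp [hc]
  have hclast : c (Fin.last r) = s := by simp [hc]
  have hcre : ∀ i, 1 ≤ (c i).re := by
    intro i
    induction i using Fin.lastCases with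
    | last => rw [hclast]; linarith
    | cast j => rw [hccs]; rw [Complex.natCast_re]; exact_mod_cast hl j
  have hcpos : ∀ i, 0 < (c i).re := fun i => lt_of_lt_of_le one_pos (hcre i)
  -- the weights
  set M : (Fin (r+1) → ℕ) → Fin (r+1) → ℕ := fun n i => ∑ j ∈ Finset.Iic i, (2 * n j + 1)
    with hM
  have hM_le : ∀ n (i j : Fin (r+1)), j ≤ i → 2 * n j + 1 ≤ M n i := by
    intro n i j hj
    exact Finset.single_le_sum (f := fun j => 2 * n j + 1) (fun _ _ => Nat.zero_le _)
      (Finset.mem_Iic.mpr hj)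
  have hM1 : ∀ n i, 1 ≤ M n i := fun n i => le_trans (by omega) (hM_le n i i le_rfl)
  have hM1R : ∀ n i, (1:ℝ) ≤ (M n i : ℝ) := fun n i => by exact_mod_cast hM1 n i
  have hMpos : ∀ n i, (0:ℝ) < (M n i : ℝ) := fun n i => lt_of_lt_of_le one_pos (hM1R n i)
  have hM_leR : ∀ n (i j : Fin (r+1)), j ≤ i → (2 * (n j : ℝ) + 1) ≤ (M n i : ℝ) := by
    intro n i j hj
    have := hM_le n i j hj
    exact_mod_cast this
  -- the coordinate functions
  set g : (Fin (r+1) → ℕ) → Fin (r+1) → ℝ → ℂ := fun n i =>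
    Set.indicator (Set.Ioi 0)
      (fun t => (t:ℂ) ^ (c i - 1) * Complex.exp (-((M n i : ℝ) * t))) with hg
  set G : (Fin (r+1) → ℕ) → Fin (r+1) → ℝ → ℝ := fun n i =>
    Set.indicator (Set.Ioi 0)
      (fun t => t ^ ((c i).re - 1) * Real.exp (-((M n i : ℝ) * t))) with hG
  have hgG : ∀ n i t, ‖g n i t‖ = G n i t := by
    intro n i t
    by_cases ht : t ∈ Set.Ioi 0
    · rw [hg, hG]
      simp only [Set.indicator_of_mem ht]
      exact aux_norm ht
    · simp [hg, hG, Set.indicator_of_notMem ht]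
  have hgInt : ∀ n i, Integrable (g n i) := fun n i =>
    (integrable_indicator_iff measurableSet_Ioi).mpr (aux_integrableOn (hcpos i) (hMpos n i))
  have hGInt : ∀ n i, Integrable (G n i) := by
    intro n i
    have := (hgInt n i).norm
    rwa [show (fun t => ‖g n i t‖) = G n i from funext (hgG n i)] at this
  have hgIntegral : ∀ n i,
      ∫ t, g n i t = (1/((M n i : ℝ):ℂ)) ^ (c i) * Complex.Gamma (c i) := by
    intro n i
    rw [hg]
    simp only []
    rw [integral_indicator measurableSet_Ioi]
    exact Complex.integral_cpow_mul_exp_neg_mul_Ioi (hcpos i) (hMpos n i)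
  have hGIntegral : ∀ n i,
      ∫ t, G n i t = (1/(M n i : ℝ)) ^ ((c i).re) * Real.Gamma ((c i).re) := by
    intro n i
    rw [hG]
    simp only []
    rw [integral_indicator measurableSet_Ioi]
    exact Real.integral_rpow_mul_exp_neg_mul_Ioi (hcpos i) (hMpos n i)
  -- the summands
  set F : (Fin (r+1) → ℕ) → (Fin (r+1) → ℝ) → ℂ :=
    fun n x => (2:ℂ)^(r+1) * ∏ i, g n i (x i) with hF
  have hFInt : ∀ n, Integrable (F n) := fun n =>
    (Integrable.fintype_prod (f := g n) (hgInt n)).const_mul _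
  have hFnorm : ∀ n, (∫ x, ‖F n x‖) = 2^(r+1) * ∏ i, ∫ t, G n i t := by
    intro n
    have hptn : ∀ x : Fin (r+1) → ℝ, ‖F n x‖ = 2^(r+1) * ∏ i, G n i (x i) := by
      intro x
      simp only [hF]
      rw [norm_mul, norm_prod, norm_pow]
      rw [Finset.prod_congr rfl (fun i _ => hgG n i (x i))]
      norm_num
    rw [funext hptn, MeasureTheory.integral_const_mul,
      MeasureTheory.integral_fintype_prod_volume_eq_prod (ι := Fin (r+1)) (f := G n)]
  -- summability of the integrals of norms
  set ε : ℝ := (s.re - 1)/(r+1) with hε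
  have hε0 : 0 < ε := div_pos (by linarith) (by positivity)
  have hεs : ε * (r+1) = s.re - 1 := by
    rw [hε]; field_simp
  have hD : Summable (fun n : Fin (r+1) → ℕ => ∏ i, ((2 * (n i : ℝ) + 1)) ^ (-(1+ε))) := by
    have h2 : Summable (fun m : ℕ => ((m : ℝ)) ^ (-(1+ε))) :=
      Real.summable_nat_rpow.mpr (by linarith)
    have h3 := (summable_nat_add_iff 1).mpr h2
    have h1 : Summable (fun m : ℕ => ((2 * (m:ℝ) + 1)) ^ (-(1+ε))) := by
      refine Summable.of_nonneg_of_le (fun m => Real.rpow_nonneg (by positivity) _)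
        (fun m => ?_) h3
      refine Real.rpow_le_rpow_of_nonpos (by positivity) ?_ (by linarith)
      push_cast
      linarith
    exact (hasSum_pi_prod (f := fun _ m => ((2 * (m:ℝ) + 1)) ^ (-(1+ε)))
      (fun i m => Real.rpow_nonneg (by positivity) _) (fun i => h1.hasSum)).summable
  have hbound : ∀ n : Fin (r+1) → ℕ,
      ∏ i, ((M n i : ℝ)) ^ (-(c i).re) ≤ ∏ i, ((2 * (n i : ℝ) + 1)) ^ (-(1+ε)) := by
    intro n
    have hlast : ((M n (Fin.last r) : ℝ)) ^ (-(s.re - 1))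
        ≤ ∏ i, ((2 * (n i:ℝ) + 1)) ^ (-ε) := by
      have h1 : ((M n (Fin.last r) : ℝ)) ^ (-(s.re-1))
          = ∏ _i : Fin (r+1), ((M n (Fin.last r) : ℝ)) ^ (-ε) := by
        rw [Finset.prod_const, Finset.card_univ, Fintype.card_fin,
          ← Real.rpow_natCast (((M n (Fin.last r) : ℝ)) ^ (-ε)) (r+1),
          ← Real.rpow_mul (hMpos n _).le]
        congr 1
        push_cast
        linarith [hεs]
      rw [h1]
      refine Finset.prod_le_prod (fun i _ => Real.rpow_nonneg (hMpos n _).le _) (fun i _ => ?_)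
      exact Real.rpow_le_rpow_of_nonpos (by positivity)
        (hM_leR n (Fin.last r) i (Fin.le_last i)) (by linarith)
    calc ∏ i, ((M n i:ℝ)) ^ (-(c i).re)
        ≤ ∏ i, (((2*(n i:ℝ)+1)) ^ (-1:ℝ) *
            (if i = Fin.last r then ((M n (Fin.last r):ℝ)) ^ (-(s.re-1)) else 1)) := by
          refine Finset.prod_le_prod (fun i _ => Real.rpow_nonneg (hMpos n _).le _)
            (fun i _ => ?_)
          by_cases hi : i = Fin.last r
          · subst hi
            rw [if_pos rfl, hclast]
            rw [show -s.re = (-1:ℝ) + -(s.re-1) by ring, Real.rpow_add (hMpos n _)]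
            exact mul_le_mul_of_nonneg_right
              (Real.rpow_le_rpow_of_nonpos (by positivity)
                (hM_leR n _ _ le_rfl) (by norm_num))
              (Real.rpow_nonneg (hMpos n _).le _)
          · rw [if_neg hi, mul_one]
            calc ((M n i:ℝ)) ^ (-(c i).re) ≤ ((M n i:ℝ)) ^ (-1:ℝ) :=
                  Real.rpow_le_rpow_of_exponent_le (hM1R n i) (by linarith [hcre i])
              _ ≤ ((2*(n i:ℝ)+1)) ^ (-1:ℝ) :=
                  Real.rpow_le_rpow_of_nonpos (by positivity) (hM_leR n i i le_rfl)
                    (by norm_num)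
      _ = (∏ i, ((2*(n i:ℝ)+1)) ^ (-1:ℝ)) * ((M n (Fin.last r):ℝ)) ^ (-(s.re-1)) := by
          rw [Finset.prod_mul_distrib, Finset.prod_ite_eq' Finset.univ (Fin.last r)
            (fun _ => ((M n (Fin.last r):ℝ)) ^ (-(s.re-1)))]
          simp
      _ ≤ (∏ i, ((2*(n i:ℝ)+1)) ^ (-1:ℝ)) * ∏ i, ((2*(n i:ℝ)+1)) ^ (-ε) :=
          mul_le_mul_of_nonneg_left hlast
            (Finset.prod_nonneg fun i _ => Real.rpow_nonneg (by positivity) _)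
      _ = ∏ i, ((2*(n i:ℝ)+1)) ^ (-(1+ε)) := by
          rw [← Finset.prod_mul_distrib]
          refine Finset.prod_congr rfl (fun i _ => ?_)
          rw [← Real.rpow_add (by positivity)]
          congr 1
          ring
  have hFnormSummable : Summable (fun n => ∫ x, ‖F n x‖) := by
    have hval : ∀ n, (∫ x, ‖F n x‖) =
        (2^(r+1) * ∏ i, Real.Gamma ((c i).re)) * ∏ i, ((M n i:ℝ)) ^ (-(c i).re) := by
      intro n
      rw [hFnorm n]
      have hGi : ∀ i : Fin (r+1), (∫ t, G n i t)
          = Real.Gamma ((c i).re) * ((M n i:ℝ)) ^ (-(c i).re) := by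
        intro i
        rw [hGIntegral n i, one_div, Real.inv_rpow (hMpos n i).le,
          ← Real.rpow_neg (hMpos n i).le]
        ring
      rw [Finset.prod_congr rfl (fun i _ => hGi i), Finset.prod_mul_distrib]
      ring
    rw [funext hval]
    apply Summable.mul_left
    exact Summable.of_nonneg_of_le
      (fun n => Finset.prod_nonneg fun i _ => Real.rpow_nonneg (hMpos n i).le _) hbound hD
  -- the pointwise expansion of the integrand
  have hS : MeasurableSet (Set.univ.pi (fun _ : Fin (r + 1) => Set.Ioi (0 : ℝ))) :=
    MeasurableSet.univ_pi (fun _ => measurableSet_Ioi)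
  have hpt : Set.indicator (Set.univ.pi (fun _ : Fin (r + 1) => Set.Ioi (0 : ℝ)))
      (fun x => (∏ j : Fin r, ((x (Fin.castSucc j) : ℝ) : ℂ) ^ (l j - 1)) *
            ((x (Fin.last r) : ℝ) : ℂ) ^ (s - 1) *
            ∏ j : Fin (r + 1),
              1 / ((Real.sinh (∑ i ∈ Finset.Ici j, x i) : ℝ) : ℂ))
      = fun x => ∑' n, F n x := by
    funext x
    by_cases hx : x ∈ Set.univ.pi (fun _ : Fin (r + 1) => Set.Ioi (0 : ℝ))
    · have hxi : ∀ i, 0 < x i := fun i => Set.mem_univ_pi.mp hx i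
      rw [Set.indicator_of_mem hx]
      set y : Fin (r+1) → ℝ := fun j => ∑ i ∈ Finset.Ici j, x i with hy
      have hypos : ∀ j, 0 < y j := fun j =>
        Finset.sum_pos (fun i _ => hxi i) ⟨j, Finset.mem_Ici.mpr le_rfl⟩
      have h1 : HasSum (fun n : Fin (r+1) → ℕ =>
          ∏ j, (2 * Real.exp (-((2 * (n j:ℝ) + 1) * y j)))) (∏ j, 1 / Real.sinh (y j)) :=
        hasSum_pi_prod (f := fun j m => 2 * Real.exp (-((2 * (m:ℝ) + 1) * y j)))
          (fun j m => by positivity) (fun j => hasSum_one_div_sinh (hypos j))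
      have h2 : ∀ n : Fin (r+1) → ℕ,
          ∏ j, (2 * Real.exp (-((2 * (n j:ℝ) + 1) * y j)))
            = 2^(r+1) * ∏ j, Real.exp (-((M n j : ℝ) * x j)) := by
        intro n
        rw [Finset.prod_mul_distrib, Finset.prod_const, Finset.card_univ, Fintype.card_fin,
          ← Real.exp_sum, ← Real.exp_sum]
        congr 1
        have hswap : ∑ j, ((2 * (n j:ℝ) + 1) * y j) = ∑ i, ((M n i : ℝ) * x i) := by
          calc ∑ j, ((2 * (n j:ℝ) + 1) * y j)
              = ∑ j, ∑ i ∈ Finset.Ici j, (2 * (n j:ℝ) + 1) * x i := by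
                refine Finset.sum_congr rfl (fun j _ => ?_)
                rw [hy, Finset.mul_sum]
            _ = ∑ i, ∑ j ∈ Finset.Iic i, (2 * (n j:ℝ) + 1) * x i := by
                refine Finset.sum_comm' ?_
                intro a b
                simp [Finset.mem_Ici, Finset.mem_Iic, and_comm]
            _ = ∑ i, ((M n i : ℝ) * x i) := by
                refine Finset.sum_congr rfl (fun i _ => ?_)
                rw [← Finset.sum_mul]
                congr 1
                rw [hM]
                push_cast
                rfl
        rw [Finset.sum_neg_distrib, Finset.sum_neg_distrib, hswap]
      rw [funext h2] at h1
      have h3 := (h1.mapL Complex.ofRealCLM).mul_left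
        ((∏ j : Fin r, ((x (Fin.castSucc j) : ℝ) : ℂ) ^ (l j - 1)) *
          ((x (Fin.last r) : ℝ) : ℂ) ^ (s - 1))
      have h4 : (fun n : Fin (r+1) → ℕ => F n x)
          = fun n => ((∏ j : Fin r, ((x (Fin.castSucc j) : ℝ) : ℂ) ^ (l j - 1)) *
              ((x (Fin.last r) : ℝ) : ℂ) ^ (s - 1)) *
            Complex.ofRealCLM (2^(r+1) * ∏ j, Real.exp (-((M n j : ℝ) * x j))) := by
        funext n
        simp only [hF, hg]
        rw [Finset.prod_congr rfl
          (fun i _ => Set.indicator_of_mem (Set.mem_Ioi.mpr (hxi i)) _)]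
        rw [Finset.prod_mul_distrib]
        have hP : ∏ i, ((x i : ℝ):ℂ) ^ (c i - 1)
            = (∏ j : Fin r, ((x (Fin.castSucc j) : ℝ) : ℂ) ^ (l j - 1)) *
              ((x (Fin.last r) : ℝ) : ℂ) ^ (s - 1) := by
          rw [Fin.prod_univ_castSucc, hclast]
          congr 1
          refine Finset.prod_congr rfl (fun j _ => ?_)
          rw [hccs, show ((l j : ℂ) - 1) = ((l j - 1 : ℕ) : ℂ) from by
            rw [Nat.cast_sub (hl j), Nat.cast_one], Complex.cpow_natCast]
        have hE : ∏ i, Complex.exp (-((M n i : ℝ) * (x i)))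
            = ((∏ j, Real.exp (-((M n j : ℝ) * x j)) : ℝ) : ℂ) := by
          rw [Complex.ofReal_prod]
          refine Finset.prod_congr rfl (fun i _ => ?_)
          rw [Complex.ofReal_exp]
          norm_cast
        rw [hP, hE, Complex.ofRealCLM_apply]
        push_cast
        ring
      rw [h4, h3.tsum_eq, Complex.ofRealCLM_apply, Complex.ofReal_prod]
      congr 1
      refine Finset.prod_congr rfl (fun j _ => ?_)
      rw [hy]
      push_cast
      ring
    · rw [Set.indicator_of_notMem hx]
      symm
      have hz : ∀ n : Fin (r+1) → ℕ, F n x = 0 := by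
        intro n
        simp only [hF, hg]
        obtain ⟨i, hi⟩ : ∃ i, ¬ (0 < x i) := by
          by_contra h
          push_neg at h
          exact hx (Set.mem_univ_pi.mpr (fun i => h i))
        refine mul_eq_zero_of_right _ (Finset.prod_eq_zero (Finset.mem_univ i) ?_)
        exact Set.indicator_of_notMem (by simpa using hi) _
      simp only [hz]
      exact tsum_zero
  -- value of each integral
  have h₁ : ∀ n, (∫ x, F n x) =
      ((2:ℂ)^(r+1) * ((∏ j, Complex.Gamma (l j)) * Complex.Gamma s)) *
        (1 / ((∏ j : Fin r, ((M n (Fin.castSucc j) : ℕ):ℂ) ^ (l j)) *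
          ((M n (Fin.last r) : ℕ):ℂ) ^ s)) := by
    intro n
    simp only [hF]
    rw [MeasureTheory.integral_const_mul,
      MeasureTheory.integral_fintype_prod_volume_eq_prod (ι := Fin (r+1)) (f := g n)]
    rw [Finset.prod_congr rfl (fun i _ => hgIntegral n i), Finset.prod_mul_distrib]
    have hΓ : ∏ i, Complex.Gamma (c i) = (∏ j, Complex.Gamma (l j)) * Complex.Gamma s := by
      rw [Fin.prod_univ_castSucc, hclast]
      congr 1
      exact Finset.prod_congr rfl (fun j _ => by rw [hccs])
    have h4 : ∀ i, (1/((M n i : ℝ):ℂ)) ^ (c i) = (((M n i : ℕ):ℂ) ^ (c i))⁻¹ := by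
      intro i
      rw [one_div, Complex.inv_cpow _ _ (by
        rw [Complex.arg_ofReal_of_nonneg (hMpos n i).le]; exact Real.pi_ne_zero.symm)]
      norm_cast
    have hMprod : ∏ i, (1/((M n i : ℝ):ℂ)) ^ (c i)
        = 1 / ((∏ j : Fin r, ((M n (Fin.castSucc j) : ℕ):ℂ) ^ (l j)) *
          ((M n (Fin.last r) : ℕ):ℂ) ^ s) := by
      rw [Finset.prod_congr rfl (fun i _ => h4 i), Finset.prod_inv_distrib, ← one_div]
      congr 1
      rw [Fin.prod_univ_castSucc, hclast]
      congr 1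
      refine Finset.prod_congr rfl (fun j _ => ?_)
      rw [hccs, Complex.cpow_natCast]
    rw [hΓ, hMprod]
    ring
  -- nonvanishing of the Gamma factors
  have hG0 : ((∏ j, Complex.Gamma (l j)) * Complex.Gamma s) ≠ 0 := by
    refine mul_ne_zero (Finset.prod_ne_zero_iff.mpr (fun j _ => ?_))
      (Complex.Gamma_ne_zero_of_re_pos hs0)
    refine Complex.Gamma_ne_zero_of_re_pos ?_
    rw [Complex.natCast_re]
    exact_mod_cast Nat.lt_of_lt_of_le Nat.zero_lt_one (hl j)
  -- final assembly
  rw [one_div, eq_comm, inv_mul_eq_iff_eq_mul₀ hG0]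
  rw [← integral_indicator hS, hpt,
    ← integral_tsum_of_summable_integral_norm hFInt hFnormSummable, funext h₁, tsum_mul_left]
  rw [T, T0]
  have hcongr : (fun n : Fin (r+1) → ℕ =>
      1 / ((∏ j : Fin r, ((M n (Fin.castSucc j) : ℕ):ℂ) ^ (l j)) *
        ((M n (Fin.last r) : ℕ):ℂ) ^ s))
      = fun n : Fin (r+1) → ℕ =>
      1 / ((∏ j : Fin r,
          ((∑ i ∈ Finset.Iic (Fin.castSucc j), (2 * n i + 1) : ℕ) : ℂ) ^ (l j)) *
        ((∑ i, (2 * n i + 1) : ℕ) : ℂ) ^ s) := by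
    funext n
    simp only [hM]
    rw [show Finset.Iic (Fin.last r) = (Finset.univ : Finset (Fin (r+1))) from by
      ext i; simp [Fin.le_last]]
  rw [hcongr]
  ring
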